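/- For Q ∈ 𝒜° with unique source s and n vertices, the set {(r_i) ∈ L(Q) : r_s = 0} ⊆ {0,1}^{n-1} (identified via the coordinates at vertices ≠ s) contains (0,...,0) and (1,...,1) and is closed under coordinatewise min and max; i.e., ψ(Q) satisfies conditions (i), (ii), (iii) and hence lies in ℒ. -/
import Mathlib


/-! Combinatorics of quivers: walks in the double quiver, the function `l_Q`,
paths, acyclicity, condition (b), unique sources, and the set `L(Q)`.
A quiver on a vertex type `V` is encoded by its family of arrow types
`H : V → V → Type`. -/

/-- Walks in the double quiver `Q̃` of the quiver `Q` encoded by `H`: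
a step may traverse an arrow forwards (`fwd`) or backwards (`bwd`). -/
inductive DWalk {V : Type} (H : V → V → Type) : V → V → Type where
  | nil : (a : V) → DWalk H a a
  | fwd : {a b c : V} → DWalk H a b → H b c → DWalk H a c
  | bwd : {a b c : V} → DWalk H a b → H c b → DWalk H a c

/-- `c⁺(w)`: the number of forward (original) arrows used by a walk in `Q̃`. -/
def DWalk.cplus {V : Type} {H : V → V → Type} : {a b : V} → DWalk H a b → ℕ
  | _, _, .nil _ => 0
  | _, _, .fwd w _ => DWalk.cplus w + 1
  | _, _, .bwd w _ => DWalk.cplus w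

/-- `l_Q(i,j)`: the minimal number of forward arrows over all walks from `i`
to `j` in the double quiver `Q̃`.  (In particular `l_Q(i,i) = 0`.) -/
noncomputable def ell {V : Type} (H : V → V → Type) (i j : V) : ℕ :=
  sInf {m | ∃ w : DWalk H i j, DWalk.cplus w = m}

/-- Directed paths in the quiver `Q` itself. -/
inductive QPath {V : Type} (H : V → V → Type) : V → V → Type where
  | nil : (a : V) → QPath H a a
  | cons : {a b c : V} → QPath H a b → H b c → QPath H a c

def QPath.length {V : Type} {H : V → V → Type} : {a b : V} → QPath H a b → ℕ
  | _, _, .nil _ => 0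
  | _, _, .cons p _ => QPath.length p + 1

/-- `Q` has no loops and no (nontrivial, directed) cycles. -/
def QuiverAcyclic {V : Type} (H : V → V → Type) : Prop :=
  ∀ (a : V) (p : QPath H a a), QPath.length p = 0

/-- `Q` is connected (any two vertices are joined by a walk in `Q̃`). -/
def QuiverConnected {V : Type} (H : V → V → Type) : Prop :=
  ∀ a b : V, Nonempty (DWalk H a b)

/-- Condition (b): for every vertex `x`, `#s(x) + #t(x) > 1`. -/
def CondB {V : Type} (H : V → V → Type) [Fintype V] [∀ a b, Fintype (H a b)] : Prop :=
  ∀ x : V, 1 < ∑ y : V, (Fintype.card (H x y) + Fintype.card (H y x))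

/-- `s` is the unique source (vertex with no incoming arrows) of `Q`. -/
def UniqueSource {V : Type} (H : V → V → Type) (s : V) : Prop :=
  (∀ y : V, IsEmpty (H y s)) ∧ ∀ t : V, (∀ y : V, IsEmpty (H y t)) → t = s

/-- The set `L(Q) = {(r_i) ∈ ℤ_{≥0}^{Q₀} ∣ r_j ≤ r_i + l_Q(i,j) for all i,j}`. -/
def LSet {V : Type} (H : V → V → Type) : Set (V → ℕ) :=
  {r | ∀ i j : V, r j ≤ r i + ell H i j}



section Aux

variable {V : Type} {H : V → V → Type}

/-- Composition of walks in the double quiver. -/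
def DWalk.comp : {a b c : V} → DWalk H a b → DWalk H b c → DWalk H a c
  | _, _, _, w, .nil _ => w
  | _, _, _, w, .fwd u e => .fwd (w.comp u) e
  | _, _, _, w, .bwd u e => .bwd (w.comp u) e

lemma DWalk.cplus_comp : ∀ {a b c : V} (w : DWalk H a b) (u : DWalk H b c),
    (w.comp u).cplus = w.cplus + u.cplus
  | _, _, _, w, .nil _ => by simp [DWalk.comp, DWalk.cplus]
  | _, _, _, w, .fwd u e => by
      simp [DWalk.comp, DWalk.cplus, cplus_comp w u]; ring
  | _, _, _, w, .bwd u e => by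
      simp [DWalk.comp, DWalk.cplus, cplus_comp w u]

/-- Composition of directed paths. -/
def QPath.comp : {a b c : V} → QPath H a b → QPath H b c → QPath H a c
  | _, _, _, p, .nil _ => p
  | _, _, _, p, .cons q e => .cons (p.comp q) e

lemma QPath.length_comp : ∀ {a b c : V} (p : QPath H a b) (q : QPath H b c),
    (p.comp q).length = p.length + q.length
  | _, _, _, _, .nil _ => by simp [QPath.comp, QPath.length]
  | _, _, _, p, .cons q e => by
      simp [QPath.comp, QPath.length, length_comp p q]; omega

/-- Prepending an arrow to a directed path. -/
def QPath.prep : {a b c : V} → QPath H b a → H c b → QPath H c a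
  | _, _, _, .nil _, e => .cons (.nil _) e
  | _, _, _, .cons p f, e => .cons (p.prep e) f

/-- A walk using no forward arrow yields a directed path in the opposite
direction. -/
def qpathOfCplusZero : {a b : V} → (w : DWalk H a b) → w.cplus = 0 → QPath H b a
  | _, _, .nil _, _ => .nil _
  | _, _, .fwd _ _, h => absurd h (by simp [DWalk.cplus])
  | _, _, .bwd w e, h => (qpathOfCplusZero w (by simpa [DWalk.cplus] using h)).prep e

lemma QPath.length_pos {a b : V} (p : QPath H a b) (h : a ≠ b) : 0 < p.length := by
  cases p with
  | nil => exact absurd rfl h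
  | cons q e => simp [QPath.length]

lemma ell_le {p q : V} (w : DWalk H p q) : ell H p q ≤ w.cplus :=
  Nat.sInf_le ⟨w, rfl⟩

lemma ell_walk_zero (hconn : QuiverConnected H) {p q : V} (h : ell H p q = 0) :
    ∃ w : DWalk H p q, w.cplus = 0 := by
  have hne : {m | ∃ w : DWalk H p q, DWalk.cplus w = m}.Nonempty :=
    ⟨_, (hconn p q).some, rfl⟩
  have h2 : sInf {m | ∃ w : DWalk H p q, DWalk.cplus w = m} = 0 := h
  have := Nat.sInf_mem hne
  rw [h2] at this
  exact this

lemma ell_trans (hconn : QuiverConnected H) {p q r : V}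
    (h1 : ell H p q = 0) (h2 : ell H q r = 0) : ell H p r = 0 := by
  obtain ⟨w1, hw1⟩ := ell_walk_zero hconn h1
  obtain ⟨w2, hw2⟩ := ell_walk_zero hconn h2
  have := ell_le (w1.comp w2)
  rw [DWalk.cplus_comp, hw1, hw2] at this
  omega

lemma ell_antisymm (hacyc : QuiverAcyclic H) (hconn : QuiverConnected H)
    {p q : V} (h1 : ell H p q = 0) (h2 : ell H q p = 0) : p = q := by
  by_contra hne
  obtain ⟨w1, hw1⟩ := ell_walk_zero hconn h1
  obtain ⟨w2, hw2⟩ := ell_walk_zero hconn h2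
  have p1 : QPath H q p := qpathOfCplusZero w1 hw1
  have p2 : QPath H p q := qpathOfCplusZero w2 hw2
  have hcyc := hacyc q (p1.comp p2)
  rw [QPath.length_comp] at hcyc
  have := p1.length_pos (fun h => hne h.symm)
  omega

/-- In a finite acyclic quiver, any nonempty finite set of vertices contains a
vertex `i` such that no other vertex `j` of the set satisfies `ell j i = 0`. -/
lemma exists_min [DecidableEq V] (hacyc : QuiverAcyclic H) (hconn : QuiverConnected H) :
    ∀ D : Finset V, D.Nonempty → ∃ i ∈ D, ∀ j ∈ D, j ≠ i → ell H j i ≠ 0 := by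
  classical
  intro D
  induction D using Finset.strongInduction with
  | _ D ih =>
    intro hD
    obtain ⟨i, hi⟩ := hD
    by_cases h : ∃ j ∈ D, j ≠ i ∧ ell H j i = 0
    · obtain ⟨j, hjD, hji, hj0⟩ := h
      set D' := D.filter (fun k => k ≠ i ∧ ell H k i = 0) with hD'def
      have hiD' : i ∉ D' := by simp [hD'def]
      have hss : D' ⊂ D :=
        ⟨Finset.filter_subset _ _, fun hsub => hiD' (hsub hi)⟩
      have hjD' : j ∈ D' := by simp [hD'def, hjD, hji, hj0]
      obtain ⟨i', hi'D', hmin⟩ := ih D' hss ⟨j, hjD'⟩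
      have hi'i : i' ≠ i ∧ ell H i' i = 0 := by
        have := hi'D'; rw [hD'def, Finset.mem_filter] at this; exact this.2
      refine ⟨i', Finset.filter_subset _ _ hi'D', ?_⟩
      intro k hkD hki' hk0
      by_cases hki : k = i
      · subst hki
        exact hki' (ell_antisymm hacyc hconn hk0 hi'i.2)
      · have hkD' : k ∈ D' := by
          simp only [hD'def, Finset.mem_filter]
          exact ⟨hkD, hki, ell_trans hconn hk0 hi'i.2⟩
        exact hmin k hkD' hki' hk0
    · exact ⟨i, hi, fun j hj hji hj0 => h ⟨j, hj, hji, hj0⟩⟩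

end Aux

/-- For `Q ∈ 𝒜°` (finite connected acyclic, unique source
`s`, condition (b), `l(Q) ≤ 1`) with `n` vertices, the set
`ψ(Q) = {(r_i) ∈ L(Q) : r_s = 0}` (identified with a subset of `{0,1}^{n-1}`
via the coordinates at vertices `≠ s`) contains the bottom `(0,…,0)` and the
top `(1,…,1)`, every order relation in it is realized by a chain of single
coordinate steps (condition (ii)), and it is closed under coordinatewise `min`
and `max` (condition (iii)); i.e. `ψ(Q)` lies in `ℒ`. -/
theorem psi_mem_L {V : Type} [Fintype V] [DecidableEq V]
    (H : V → V → Type) [∀ a b, Fintype (H a b)]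
    (hacyc : QuiverAcyclic H) (hconn : QuiverConnected H) (hb : CondB H)
    (hl1 : ∀ x y : V, ell H x y ≤ 1)
    (s : V) (hs : UniqueSource H s) :
    (∀ r ∈ LSet H, r s = 0 → ∀ i, r i ≤ 1) ∧
    ((fun _ : V => (0:ℕ)) ∈ LSet H) ∧
    ((fun i => if i = s then 0 else 1) ∈ LSet H ∧
      (fun i => if i = s then (0:ℕ) else 1) s = 0) ∧
    (∀ r ∈ LSet H, r s = 0 → ∀ r' ∈ LSet H, r' s = 0 → (∀ i, r i ≤ r' i) →
      Relation.ReflTransGen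
        (fun a b => a ∈ LSet H ∧ a s = 0 ∧ b ∈ LSet H ∧ b s = 0 ∧
          (∀ i, a i ≤ b i) ∧ ∃! i, a i ≠ b i) r r') ∧
    (∀ r ∈ LSet H, r s = 0 → ∀ r' ∈ LSet H, r' s = 0 →
      ((fun i => min (r i) (r' i)) ∈ LSet H ∧
       (fun i => max (r i) (r' i)) ∈ LSet H)) := by
  classical
  have bound : ∀ r ∈ LSet H, r s = 0 → ∀ i, r i ≤ 1 := by
    intro r hr hrs i
    have h1 := hr s i
    have h2 := hl1 s i
    omega
  have ells : ∀ j : V, j ≠ s → ell H s j ≠ 0 := by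
    intro j hj h0
    obtain ⟨w, hw⟩ := ell_walk_zero hconn h0
    have p : QPath H j s := qpathOfCplusZero w hw
    cases p with
    | nil => exact hj rfl
    | cons q e => exact (hs.1 _).false e
  refine ⟨bound, ?_, ⟨?_, by simp⟩, ?_, ?_⟩
  · intro i j
    exact Nat.zero_le _
  · intro i j
    simp only
    by_cases hjs : j = s
    · simp [hjs]
    · by_cases his : i = s
      · subst his
        simp only [if_neg hjs, if_pos]
        have := ells j hjs
        omega
      · simp [hjs, his]
  · -- condition (ii)
    intro r hr hrs r' hr' hr's hle
    suffices hmain : ∀ n : ℕ, ∀ a : V → ℕ, a ∈ LSet H → a s = 0 → (∀ i, a i ≤ r' i) →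
        (Finset.univ.filter fun k => a k ≠ r' k).card = n →
        Relation.ReflTransGen
          (fun a b => a ∈ LSet H ∧ a s = 0 ∧ b ∈ LSet H ∧ b s = 0 ∧
            (∀ i, a i ≤ b i) ∧ ∃! i, a i ≠ b i) a r' by
      exact hmain _ r hr hrs hle rfl
    intro n
    induction n using Nat.strong_induction_on with
    | _ n ih =>
      intro a ha has hale hcard
      rcases Finset.eq_empty_or_nonempty (Finset.univ.filter fun k => a k ≠ r' k)
        with he | hne
      · have hae : a = r' := by
          funext k
          by_contra hk
          have hmem : k ∈ Finset.univ.filter fun k => a k ≠ r' k := by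
            simp [hk]
          rw [he] at hmem
          simp at hmem
        rw [hae]
      · obtain ⟨i, hiDmem, hmin⟩ := exists_min hacyc hconn _ hne
        have hiD := hiDmem
        simp only [Finset.mem_filter] at hiD
        have hine : a i ≠ r' i := hiD.2
        have hai0 : a i = 0 ∧ r' i = 1 := by
          have h1 := hale i
          have h2 := bound r' hr' hr's i
          omega
        have his : i ≠ s := by
          intro h
          subst h
          exact hine (by rw [has, hr's])
        set b := Function.update a i 1 with hbdef
        have hbval : ∀ k, k ≠ i → b k = a k := fun k hk => Function.update_of_ne hk _ _
        have hbi : b i = 1 := Function.update_self _ _ _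
        have hbL : b ∈ LSet H := by
          intro p q
          by_cases hq : q = i
          · rw [hq, hbi]
            by_cases hp : p = i
            · rw [hp, hbi]
              omega
            · rw [hbval p hp]
              rcases Nat.eq_zero_or_pos (a p) with hap | hap
              · have hpi : ell H p i ≠ 0 := by
                  intro h0
                  have hti := hr' p i
                  rw [h0] at hti
                  have hb2 := bound r' hr' hr's p
                  have hrp1 : r' p = 1 := by omega
                  have hpD : p ∈ Finset.univ.filter fun k => a k ≠ r' k := by
                    simp [hap, hrp1]
                  exact hmin p hpD hp h0
                omega
              · omega
          · rw [hbval q hq]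
            by_cases hp : p = i
            · subst hp
              rw [hbi]
              have := bound a ha has q
              omega
            · rw [hbval p hp]
              exact ha p q
        have hbs : b s = 0 := by rw [hbval s (fun h => his h.symm), has]
        have hble : ∀ k, b k ≤ r' k := by
          intro k
          by_cases hk : k = i
          · subst hk
            rw [hbi, hai0.2]
          · rw [hbval k hk]
            exact hale k
        have hstep1 : a ∈ LSet H ∧ a s = 0 ∧ b ∈ LSet H ∧ b s = 0 ∧
            (∀ k, a k ≤ b k) ∧ ∃! k, a k ≠ b k := by
          refine ⟨ha, has, hbL, hbs, ?_, i, ?_, ?_⟩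
          · intro k
            by_cases hk : k = i
            · subst hk
              rw [hbi, hai0.1]
              omega
            · rw [hbval k hk]
          · simp [hbi, hai0.1]
          · intro k hk
            by_contra hki
            exact hk (hbval k hki).symm
        have hsub : (Finset.univ.filter fun k => b k ≠ r' k) ⊆
            (Finset.univ.filter fun k => a k ≠ r' k).erase i := by
          intro k hk
          simp only [Finset.mem_filter, Finset.mem_erase, Finset.mem_univ,
            true_and] at hk ⊢
          have hki : k ≠ i := by
            intro h
            subst h
            rw [hbi, hai0.2] at hk
            exact hk rfl
          rw [hbval k hki] at hk
          exact ⟨hki, hk⟩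
        have hlt : (Finset.univ.filter fun k => b k ≠ r' k).card < n := by
          have h1 := Finset.card_le_card hsub
          rw [Finset.card_erase_of_mem hiDmem, hcard] at h1
          have h2 : 0 < n := by
            rw [← hcard]
            exact Finset.card_pos.mpr hne
          omega
        exact Relation.ReflTransGen.head hstep1
          (ih _ hlt b hbL hbs hble rfl)
  · intro r hr hrs r' hr' hr's
    constructor
    · intro i j
      show min (r j) (r' j) ≤ min (r i) (r' i) + ell H i j
      have h1 := hr i j
      have h2 := hr' i j
      omega
    · intro i j
      show max (r j) (r' j) ≤ max (r i) (r' i) + ell H i j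
      have h1 := hr i j
      have h2 := hr' i j
      omega
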